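/- Suppose Σᵢ mᵢ σ(ψᵢ) ≤ V (the previous iterate is feasible) and Σᵢ mᵢ σ(ψᵢ − α gᵢ) ≥ V. Then the unique root μ* of Σᵢ mᵢ σ(ψᵢ − α gᵢ − α μ) = V satisfies 0 ≤ μ* ≤ max_i(−gᵢ). -/
import Mathlib


/-- If `∑ i, m i * σ(ψ i) ≤ V` (feasible previous iterate) and
`∑ i, m i * σ(ψ i - α g i) ≥ V`, then the unique root `μ*` of
`∑ i, m i * σ(ψ i - α g i - α μ) = V` satisfies `0 ≤ μ* ≤ max_i (-g i)`. -/
theorem stmt_8 {N : ℕ} [NeZero N] (m ψ g : Fin N → ℝ) (hm : ∀ i, 0 < m i)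
    (α : ℝ) (hα : 0 < α) (V : ℝ) (hV : V ∈ Set.Ioo (0 : ℝ) (∑ i, m i))
    (σ : ℝ → ℝ) (hσ : σ = fun x => 1 / (1 + Real.exp (-x)))
    (hfeas : ∑ i, m i * σ (ψ i) ≤ V)
    (hviol : V ≤ ∑ i, m i * σ (ψ i - α * g i)) :
    (∃! μ : ℝ, ∑ i, m i * σ (ψ i - α * g i - α * μ) = V) ∧
    (∀ μ : ℝ, (∑ i, m i * σ (ψ i - α * g i - α * μ) = V) →
      0 ≤ μ ∧ μ ≤ Finset.univ.sup' Finset.univ_nonempty (fun i => -g i)) := by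
  have hσmono : StrictMono σ := by
    intro x y hxy
    rw [hσ]
    have h1 : (0:ℝ) < 1 + Real.exp (-y) := by positivity
    have h2 : Real.exp (-y) < Real.exp (-x) := Real.exp_lt_exp.mpr (by linarith)
    exact one_div_lt_one_div_of_lt h1 (by linarith)
  have hσcont : Continuous σ := by
    rw [hσ]
    have h : ∀ x : ℝ, 1 + Real.exp (-x) ≠ 0 := fun x => by positivity
    exact Continuous.div continuous_const (by continuity) h
  set f : ℝ → ℝ := fun μ => ∑ i, m i * σ (ψ i - α * g i - α * μ) with hf
  have hanti : StrictAnti f := by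
    intro μ ν h
    apply Finset.sum_lt_sum_of_nonempty Finset.univ_nonempty
    intro i _
    exact mul_lt_mul_of_pos_left (hσmono (by nlinarith)) (hm i)
  have hcont : Continuous f := by
    apply continuous_finset_sum
    intro i _
    exact Continuous.mul continuous_const (hσcont.comp (by continuity))
  set M : ℝ := Finset.univ.sup' Finset.univ_nonempty (fun i => -g i) with hM
  have hf0 : V ≤ f 0 := by
    simpa [hf, mul_zero] using hviol
  have hfM : f M ≤ V := by
    refine le_trans ?_ hfeas
    apply Finset.sum_le_sum
    intro i _
    have hgi : -g i ≤ M := Finset.le_sup' (fun i => -g i) (Finset.mem_univ i)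
    have : ψ i - α * g i - α * M ≤ ψ i := by nlinarith
    exact mul_le_mul_of_nonneg_left (hσmono.monotone this) (hm i).le
  have hM0 : 0 ≤ M := by
    by_contra h
    have := hanti (lt_of_not_ge h)
    linarith
  constructor
  · obtain ⟨μ, hμmem, hμ⟩ := intermediate_value_Icc' hM0 hcont.continuousOn ⟨hfM, hf0⟩
    exact ⟨μ, hμ, fun ν hν => hanti.injective (hν.trans hμ.symm)⟩
  · intro μ hroot
    have hroot' : f μ = V := hroot
    constructor
    · by_contra h
      have : f 0 < f μ := hanti (lt_of_not_ge h)
      linarith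
    · by_contra h
      have : f μ < f M := hanti (lt_of_not_ge h)
      linarith
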